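/- arXiv:0712.2533 — 3 statements merged into one kernel-verified Lean document; each statement's English description precedes it below -/
import Mathlib

section
/- Let r be odd, ρ = e^{2πi/r}, and let B : ℂ^r → ℝ be defined by B((z_j)_j) = Σ_{j ∈ ZMod r} y_j·(x_{j+1} − x_j), where z_j = x_j + i y_j. Then for z_j = α·ρ^{mj} with α ∈ ℂ and m an integer with 1 ≤ m ≤ (r−1)/2, one has 2·B(z) = −r·|α|²·sin(2πm/r), which is strictly negative. -/
open Complex

noncomputable section

/-- The quadratic form `B (z) = Σ_j y_j (x_{j+1} − x_j)` on `ℂ^r`,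
where `z_j = x_j + i y_j`. -/
def discreteAction (r : ℕ) [NeZero r] (z : ZMod r → ℂ) : ℝ :=
  ∑ j : ZMod r, (z j).im * ((z (j + 1)).re - (z j).re)

/-- On the Fourier mode `z_j = α ρ^{mj}` with `1 ≤ m ≤ (r−1)/2` (`r` odd),
the discrete action satisfies `2 B (z) = − r |α|² sin (2πm/r)`, which is
strictly negative for `α ≠ 0`. -/
theorem discreteAction_on_mode (r : ℕ) [NeZero r] (hodd : Odd r)
    (m : ℕ) (hm1 : 1 ≤ m) (hm2 : m ≤ (r - 1) / 2) (α : ℂ)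
    (z : ZMod r → ℂ)
    (hz : z = fun j => α * Complex.exp (2 * Real.pi * I / r) ^ (m * j.val)) :
    2 * discreteAction r z = -(r : ℝ) * ‖α‖ ^ 2 *
        Real.sin (2 * Real.pi * m / r) ∧
      (α ≠ 0 → 2 * discreteAction r z < 0) := by
  obtain ⟨t, ht⟩ := hodd
  have hr : r ≠ 0 := NeZero.ne r
  have h2m : 2 * m < r := by omega
  have hr1 : 1 < r := by omega
  haveI : Fact (1 < r) := ⟨hr1⟩
  set ζ : ℂ := Complex.exp (2 * Real.pi * I / r) with hζ
  have hprim : IsPrimitiveRoot ζ r := Complex.isPrimitiveRoot_exp r hr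
  have hζr : ζ ^ r = 1 := hprim.pow_eq_one
  have key : ∀ a b : ℕ, a ≡ b [MOD r] → ζ ^ a = ζ ^ b := by
    intro a b h
    rw [pow_eq_pow_mod a hζr, pow_eq_pow_mod b hζr, h]
  -- step of the mode
  have hstep : ∀ j : ZMod r, z (j + 1) = z j * ζ ^ m := by
    intro j
    have hv : (j + 1).val ≡ j.val + 1 [MOD r] := by
      rw [ZMod.val_add, ZMod.val_one]
      exact Nat.mod_modEq _ _
    rw [hz]
    simp only
    rw [key _ _ (Nat.ModEq.mul_left m hv), mul_add, mul_one, pow_add, mul_assoc]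
  -- vanishing of the second Fourier mode
  have hgeom : ∑ j : ZMod r, (ζ ^ (2 * m)) ^ j.val = 0 := by
    have h1 : ∑ j : ZMod r, (ζ ^ (2 * m)) ^ j.val
        = ∑ k ∈ Finset.range r, (ζ ^ (2 * m)) ^ k := by
      refine Finset.sum_nbij' (fun j => j.val) (fun k => (k : ZMod r))
        (fun j _ => Finset.mem_range.mpr (ZMod.val_lt j)) (fun k _ => Finset.mem_univ _)
        (fun j _ => by simp [ZMod.natCast_val, ZMod.cast_id])
        (fun k hk => ZMod.val_cast_of_lt (Finset.mem_range.mp hk))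
        (fun j _ => rfl)
    have hne1 : ζ ^ (2 * m) ≠ 1 :=
      hprim.pow_ne_one_of_pos_of_lt (by omega) h2m
    rw [h1, geom_sum_eq hne1, ← pow_mul, mul_comm (2 * m) r, pow_mul, hζr,
      one_pow, sub_self, zero_div]
  have hsq : ∑ j : ZMod r, (z j) ^ 2 = 0 := by
    have : ∀ j : ZMod r, (z j) ^ 2 = α ^ 2 * (ζ ^ (2 * m)) ^ j.val := by
      intro j
      rw [hz]
      simp only
      rw [mul_pow, ← pow_mul, ← pow_mul]
      ring_nf
    rw [Finset.sum_congr rfl fun j _ => this j, ← Finset.mul_sum, hgeom, mul_zero]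
  -- constant modulus
  have habs : ∀ j : ZMod r, Complex.normSq (z j) = ‖α‖ ^ 2 := by
    intro j
    rw [hz]
    simp only [map_mul, ← Complex.sq_norm, map_pow]
    have : ‖ζ‖ = 1 := by
      rw [hζ, Complex.norm_exp]
      have : (2 * (Real.pi : ℂ) * I / r).re = 0 := by
        simp [Complex.div_re]
      rw [this, Real.exp_zero]
    rw [this]
    ring
  -- the imaginary part of ζ^m
  have him : (ζ ^ m).im = Real.sin (2 * Real.pi * m / r) := by
    rw [hζ, ← Complex.exp_nat_mul]
    have : (m : ℂ) * (2 * Real.pi * I / r) = ((2 * Real.pi * m / r : ℝ) : ℂ) * I := by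
      push_cast
      field_simp
    rw [this, Complex.exp_ofReal_mul_I_im]
  -- main computation
  have hmain : 2 * discreteAction r z = -(r : ℝ) * ‖α‖ ^ 2 *
      Real.sin (2 * Real.pi * m / r) := by
    have expand : ∀ j : ZMod r, 2 * ((z j).im * ((z (j + 1)).re - (z j).re))
        = ((z j) ^ 2).im * ((ζ ^ m).re - 1) + ((z j) ^ 2).re * (ζ ^ m).im
          - Complex.normSq (z j) * (ζ ^ m).im := by
      intro j
      rw [hstep j]
      simp [Complex.normSq_apply, pow_two, Complex.mul_re, Complex.mul_im]
      ring
    calc 2 * discreteAction r z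
        = ∑ j : ZMod r, 2 * ((z j).im * ((z (j + 1)).re - (z j).re)) := by
          rw [discreteAction, Finset.mul_sum]
      _ = (∑ j : ZMod r, ((z j) ^ 2).im) * ((ζ ^ m).re - 1)
          + (∑ j : ZMod r, ((z j) ^ 2).re) * (ζ ^ m).im
          - (∑ j : ZMod r, Complex.normSq (z j)) * (ζ ^ m).im := by
          rw [Finset.sum_congr rfl fun j _ => expand j]
          rw [Finset.sum_sub_distrib, Finset.sum_add_distrib, ← Finset.sum_mul,
            ← Finset.sum_mul, ← Finset.sum_mul]
      _ = -(r : ℝ) * ‖α‖ ^ 2 * Real.sin (2 * Real.pi * m / r) := by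
          have h1 : ∑ j : ZMod r, ((z j) ^ 2).im = 0 := by
            rw [← Complex.im_sum, hsq, Complex.zero_im]
          have h2 : ∑ j : ZMod r, ((z j) ^ 2).re = 0 := by
            rw [← Complex.re_sum, hsq, Complex.zero_re]
          have h3 : ∑ j : ZMod r, Complex.normSq (z j) = (r : ℝ) * ‖α‖ ^ 2 := by
            rw [Finset.sum_congr rfl fun j _ => habs j, Finset.sum_const,
              Finset.card_univ, ZMod.card, nsmul_eq_mul]
          rw [h1, h2, h3, him]
          ring
  refine ⟨hmain, fun hα => ?_⟩
  rw [hmain]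
  have hsin : 0 < Real.sin (2 * Real.pi * m / r) := by
    apply Real.sin_pos_of_pos_of_lt_pi
    · positivity
    · rw [div_lt_iff₀ (by positivity)]
      have : (2 * m : ℝ) < r := by exact_mod_cast h2m
      nlinarith [Real.pi_pos]
  have habsne : ‖α‖ ≠ 0 := by simpa using hα
  have hα2 : 0 < ‖α‖ ^ 2 := by positivity
  have hr0 : (0 : ℝ) < r := by exact_mod_cast Nat.pos_of_ne_zero hr
  nlinarith [mul_pos (mul_pos hr0 hα2) hsin]


end
end

section
/- Let A be a real symmetric matrix on a finite-dimensional real inner product space V, with negative eigenspace E₋, kernel E₀, and positive eigenspace E₊. Let B be another symmetric matrix whose restriction to E₀ is negative definite (as a quadratic form: xᵀBx < 0 for x ∈ E₀ \ {0}). Then there exists s₀ > 0 such that for all 0 < s ≤ s₀, the quadratic form x ↦ xᵀ(A + sB)x is negative definite on E₋ ⊕ E₀. -/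
open Module

/-- On a finite-dimensional space, a quadratic form that is negative on the
nonzero elements of a subspace is uniformly negative there. -/
lemma aux_neg_bound {V : Type*} [NormedAddCommGroup V] [InnerProductSpace ℝ V]
    [FiniteDimensional ℝ V] (T : V →ₗ[ℝ] V) (U : Submodule ℝ V)
    (h : ∀ x ∈ U, x ≠ 0 → (inner ℝ (T x) x : ℝ) < 0) :
    ∃ c > 0, ∀ x ∈ U, (inner ℝ (T x) x : ℝ) ≤ -c * ‖x‖ ^ 2 := by
  by_cases hU : U = ⊥
  · refine ⟨1, one_pos, ?_⟩
    intro x hx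
    subst hU
    have : x = 0 := Submodule.mem_bot ℝ |>.mp hx
    simp [this]
  · obtain ⟨u, huU, hu0⟩ := (Submodule.ne_bot_iff U).mp hU
    have hTc : Continuous T := T.continuous_of_finiteDimensional
    have hf : Continuous fun w : U => (inner ℝ (T (w : V)) (w : V) : ℝ) :=
      (hTc.comp continuous_subtype_val).inner continuous_subtype_val
    have hsph : IsCompact (Metric.sphere (0 : U) 1) := isCompact_sphere 0 1
    have hnu : ‖u‖ ≠ 0 := norm_ne_zero_iff.mpr hu0
    have hne : (Metric.sphere (0 : U) 1).Nonempty := by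
      refine ⟨(‖u‖⁻¹ : ℝ) • ⟨u, huU⟩, ?_⟩
      have hcoe : ‖(⟨u, huU⟩ : U)‖ = ‖u‖ := rfl
      simp only [Metric.mem_sphere, dist_zero_right, norm_smul, hcoe,
        norm_inv, norm_norm]
      exact inv_mul_cancel₀ hnu
    obtain ⟨w₀, hw₀, hmax⟩ := hsph.exists_isMaxOn hne hf.continuousOn
    have hw₀n : ‖(w₀ : V)‖ = 1 := by
      have : ‖w₀‖ = 1 := by simpa using hw₀
      exact this
    have hw₀0 : (w₀ : V) ≠ 0 := by
      intro hc
      rw [hc] at hw₀n; simp at hw₀n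
    have hc0 : (inner ℝ (T (w₀ : V)) (w₀ : V) : ℝ) < 0 := h _ w₀.2 hw₀0
    refine ⟨-(inner ℝ (T (w₀ : V)) (w₀ : V) : ℝ), by linarith, ?_⟩
    intro x hxU
    by_cases hx0 : x = 0
    · simp [hx0]
    · have hnx : (0:ℝ) < ‖x‖ := norm_pos_iff.mpr hx0
      set w : U := (‖x‖⁻¹ : ℝ) • ⟨x, hxU⟩ with hw
      have hwS : w ∈ Metric.sphere (0 : U) 1 := by
        have hcoe : ‖(⟨x, hxU⟩ : U)‖ = ‖x‖ := rfl
        simp only [Metric.mem_sphere, dist_zero_right, hw, norm_smul, hcoe,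
          norm_inv, norm_norm]
        exact inv_mul_cancel₀ hnx.ne'
      have hle : (inner ℝ (T ((w : V))) (w : V) : ℝ)
          ≤ (inner ℝ (T (w₀ : V)) (w₀ : V) : ℝ) := hmax hwS
      have hval : (inner ℝ (T ((w : V))) (w : V) : ℝ)
          = ‖x‖⁻¹ ^ 2 * (inner ℝ (T x) x : ℝ) := by
        have hcoe : ((w : V)) = (‖x‖⁻¹ : ℝ) • x := rfl
        rw [hcoe, map_smul, real_inner_smul_left, real_inner_smul_right]
        ring
      have key : ‖x‖⁻¹ ^ 2 * (inner ℝ (T x) x : ℝ)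
          ≤ (inner ℝ (T (w₀ : V)) (w₀ : V) : ℝ) := by
        rw [← hval]; exact hle
      have hx2 : (0:ℝ) < ‖x‖ ^ 2 := by positivity
      have h2 : (inner ℝ (T x) x : ℝ)
          ≤ (inner ℝ (T (w₀ : V)) (w₀ : V) : ℝ) * ‖x‖ ^ 2 := by
        have hmul := mul_le_mul_of_nonneg_left key hx2.le
        calc (inner ℝ (T x) x : ℝ)
            = ‖x‖ ^ 2 * (‖x‖⁻¹ ^ 2 * (inner ℝ (T x) x : ℝ)) := by
              field_simp
          _ ≤ ‖x‖ ^ 2 * (inner ℝ (T (w₀ : V)) (w₀ : V) : ℝ) := hmul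
          _ = (inner ℝ (T (w₀ : V)) (w₀ : V) : ℝ) * ‖x‖ ^ 2 := by ring
      linarith [h2]

set_option maxHeartbeats 1000000 in
/-- Stability of the negative index under a perturbation which is negative
definite on the kernel: if `A` is a symmetric operator on a finite-dimensional
real inner product space with negative spectral subspace `E₋` and kernel `E₀`,
and `B` is a symmetric operator whose quadratic form is negative definite on
`E₀`, then for all sufficiently small `s > 0` the quadratic form of `A + s B`
is negative definite on `E₋ ⊕ E₀`. -/
theorem negIndex_stable_under_perturbation
    {V : Type*} [NormedAddCommGroup V] [InnerProductSpace ℝ V]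
    [FiniteDimensional ℝ V]
    (A B : V →ₗ[ℝ] V) (hA : A.IsSymmetric) (hB : B.IsSymmetric)
    (Eneg : Submodule ℝ V)
    (hEneg : Eneg = ⨆ μ : {μ : ℝ // μ < 0}, Module.End.eigenspace A (μ : ℝ))
    (E0 : Submodule ℝ V) (hE0 : E0 = Module.End.eigenspace A 0)
    (hBneg : ∀ x ∈ E0, x ≠ 0 → (inner ℝ (B x) x : ℝ) < 0) :
    ∃ s₀ > 0, ∀ s : ℝ, 0 < s → s ≤ s₀ →
      ∀ x ∈ Eneg ⊔ E0, x ≠ 0 → (inner ℝ ((A + s • B) x) x : ℝ) < 0 := by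
  classical
  have hn : finrank ℝ V = finrank ℝ V := rfl
  set e := hA.eigenvectorBasis hn with he
  set μ := hA.eigenvalues hn with hμ
  have heig : ∀ i, A (e i) = μ i • e i := fun i => hA.apply_eigenvectorBasis hn i
  -- Step A: vectors of Eneg are orthogonal to eigenvectors with nonneg eigenvalue
  have horth : ∀ v ∈ Eneg, ∀ i, 0 ≤ μ i → (inner ℝ (e i) v : ℝ) = 0 := by
    set K : Submodule ℝ V :=
      { carrier := {v | ∀ i, 0 ≤ μ i → (inner ℝ (e i) v : ℝ) = 0}
        zero_mem' := by intro i _; simp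
        add_mem' := by
          intro a b ha hb i hi
          rw [inner_add_right, ha i hi, hb i hi, add_zero]
        smul_mem' := by
          intro r a ha i hi
          rw [real_inner_smul_right, ha i hi, mul_zero] } with hK
    have hEK : Eneg ≤ K := by
      rw [hEneg]
      refine iSup_le ?_
      rintro ⟨t, ht⟩ v hv
      intro i hi
      have hAv : A v = t • v := Module.End.mem_eigenspace_iff.mp hv
      have h1 : (inner ℝ (e i) (A v) : ℝ) = t * (inner ℝ (e i) v : ℝ) := by
        rw [hAv, real_inner_smul_right]
      have h2 : (inner ℝ (e i) (A v) : ℝ) = μ i * (inner ℝ (e i) v : ℝ) := by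
        rw [← hA (e i) v, heig i, real_inner_smul_left]
      have hne : μ i - t ≠ 0 := by intro hc; nlinarith
      have hz : (μ i - t) * (inner ℝ (e i) v : ℝ) = 0 := by nlinarith [h1, h2]
      exact (mul_eq_zero.mp hz).resolve_left hne
    intro v hv i hi
    exact hEK hv i hi
  -- Step B: the quadratic form of A is negative on Eneg
  have hAneg : ∀ y ∈ Eneg, y ≠ 0 → (inner ℝ (A y) y : ℝ) < 0 := by
    intro y hy hy0
    have hrep : (inner ℝ (A y) y : ℝ) = ∑ i, μ i * (inner ℝ (e i) y : ℝ) ^ 2 := by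
      rw [← OrthonormalBasis.sum_inner_mul_inner e (A y) y]
      refine Finset.sum_congr rfl fun i _ => ?_
      have : (inner ℝ (A y) (e i) : ℝ) = μ i * (inner ℝ (e i) y : ℝ) := by
        rw [hA y (e i), heig i, real_inner_smul_right, real_inner_comm]
      rw [this]; ring
    have hex : ∃ i, (inner ℝ (e i) y : ℝ) ≠ 0 := by
      by_contra hc
      push_neg at hc
      apply hy0
      have hrep0 : e.repr y = 0 := by
        ext i
        simp [OrthonormalBasis.repr_apply_apply, hc i]
      have := congrArg e.repr.symm hrep0
      simpa using this
    obtain ⟨i₀, hi₀⟩ := hex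
    have hμi₀ : μ i₀ < 0 := by
      by_contra hc
      push_neg at hc
      exact hi₀ (horth y hy i₀ hc)
    rw [hrep]
    have hlt : ∑ i, μ i * (inner ℝ (e i) y : ℝ) ^ 2
        < ∑ _i : Fin (finrank ℝ V), (0:ℝ) := by
      refine Finset.sum_lt_sum ?_ ⟨i₀, Finset.mem_univ _, ?_⟩
      · intro i _
        rcases le_or_gt 0 (μ i) with hpos | hneg
        · rw [horth y hy i hpos]; simp
        · nlinarith [sq_nonneg (inner ℝ (e i) y : ℝ)]
      · have hsq : (0:ℝ) < (inner ℝ (e i₀) y : ℝ) ^ 2 := by positivity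
        nlinarith
    simpa using hlt
  -- uniform bounds
  obtain ⟨c, hc, hcb⟩ := aux_neg_bound A Eneg hAneg
  obtain ⟨b, hb, hbb⟩ := aux_neg_bound B E0 hBneg
  obtain ⟨M, hM0, hMb⟩ : ∃ M : ℝ, 0 < M ∧ ∀ v : V, ‖B v‖ ≤ M * ‖v‖ := by
    obtain ⟨C, hC0, hC⟩ := (LinearMap.toContinuousLinearMap B).bound
    exact ⟨C, hC0, fun v => by simpa using hC v⟩
  have hBle : ∀ v w : V, (inner ℝ (B v) w : ℝ) ≤ M * ‖v‖ * ‖w‖ := by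
    intro v w
    have h1 : (inner ℝ (B v) w : ℝ) ≤ ‖B v‖ * ‖w‖ := real_inner_le_norm _ _
    have h3 : ‖B v‖ ≤ M * ‖v‖ := hMb v
    calc (inner ℝ (B v) w : ℝ) ≤ ‖B v‖ * ‖w‖ := h1
      _ ≤ M * ‖v‖ * ‖w‖ := mul_le_mul_of_nonneg_right h3 (norm_nonneg w)
  have hD : (0:ℝ) < b * M + 2 * M ^ 2 := by positivity
  refine ⟨b * c / (2 * (b * M + 2 * M ^ 2)), by positivity, ?_⟩
  intro s hs hs0 x hx hx0
  obtain ⟨y, hy, z, hz, hyz⟩ := Submodule.mem_sup.mp hx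
  have hAz : A z = 0 := by
    have := Module.End.mem_eigenspace_iff.mp (hE0 ▸ hz)
    simpa using this
  have hAx : (inner ℝ ((A + s • B) x) x : ℝ)
      = (inner ℝ (A y) y : ℝ) + s * (inner ℝ (B x) x : ℝ) := by
    have hAxx : A x = A y := by rw [← hyz, map_add, hAz, add_zero]
    have h1 : (inner ℝ (A y) z : ℝ) = 0 := by
      rw [hA y z, hAz, inner_zero_right]
    have h2 : (inner ℝ (A x) x : ℝ) = (inner ℝ (A y) y : ℝ) := by
      rw [hAxx, ← hyz, inner_add_right, h1, add_zero]
    have h3 : (A + s • B) x = A x + s • B x := by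
      simp [LinearMap.add_apply, LinearMap.smul_apply]
    rw [h3, inner_add_left, real_inner_smul_left, h2]
  rw [hAx]
  set Y := ‖y‖ with hYd
  set Z := ‖z‖ with hZd
  have hY0 : (0:ℝ) ≤ Y := norm_nonneg y
  have hZ0 : (0:ℝ) ≤ Z := norm_nonneg z
  have hBxx : (inner ℝ (B x) x : ℝ) ≤ M * Y ^ 2 + 2 * M * Y * Z - b * Z ^ 2 := by
    have hdec : (inner ℝ (B x) x : ℝ)
        = (inner ℝ (B y) y : ℝ) + (inner ℝ (B y) z : ℝ)
          + (inner ℝ (B z) y : ℝ) + (inner ℝ (B z) z : ℝ) := by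
      rw [← hyz, map_add, inner_add_left, inner_add_right, inner_add_right]
      ring
    have e1 := hBle y y
    have e2 := hBle y z
    have e3 := hBle z y
    have e4 := hbb z hz
    rw [hdec]
    nlinarith [e1, e2, e3, e4]
  have hAyy : (inner ℝ (A y) y : ℝ) ≤ -c * Y ^ 2 := hcb y hy
  have hyzne : y ≠ 0 ∨ z ≠ 0 := by
    by_contra hcon
    push_neg at hcon
    apply hx0
    rw [← hyz, hcon.1, hcon.2, add_zero]
  have hDne : b * M + 2 * M ^ 2 ≠ 0 := hD.ne'
  have hsD : s * (b * M + 2 * M ^ 2) ≤ b * c / 2 := by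
    have hmul := mul_le_mul_of_nonneg_right hs0 hD.le
    calc s * (b * M + 2 * M ^ 2)
        ≤ b * c / (2 * (b * M + 2 * M ^ 2)) * (b * M + 2 * M ^ 2) := hmul
      _ = b * c / 2 := by field_simp
  have hamgm : b * (2 * M * Y * Z) ≤ 2 * M ^ 2 * Y ^ 2 + b ^ 2 / 2 * Z ^ 2 := by
    nlinarith [sq_nonneg (2 * M * Y - b * Z)]
  -- combine everything
  have P1 : b * (inner ℝ (A y) y : ℝ) ≤ b * (-c * Y ^ 2) :=
    mul_le_mul_of_nonneg_left hAyy hb.le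
  have P2 : s * (inner ℝ (B x) x : ℝ)
      ≤ s * (M * Y ^ 2 + 2 * M * Y * Z - b * Z ^ 2) :=
    mul_le_mul_of_nonneg_left hBxx hs.le
  have P3 : b * (s * (inner ℝ (B x) x : ℝ))
      ≤ b * (s * (M * Y ^ 2 + 2 * M * Y * Z - b * Z ^ 2)) :=
    mul_le_mul_of_nonneg_left P2 hb.le
  have P4 : s * (b * (2 * M * Y * Z))
      ≤ s * (2 * M ^ 2 * Y ^ 2 + b ^ 2 / 2 * Z ^ 2) :=
    mul_le_mul_of_nonneg_left hamgm hs.le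
  have P5 : s * (b * M + 2 * M ^ 2) * Y ^ 2 ≤ b * c / 2 * Y ^ 2 :=
    mul_le_mul_of_nonneg_right hsD (sq_nonneg Y)
  have hbG : b * ((inner ℝ (A y) y : ℝ) + s * (inner ℝ (B x) x : ℝ))
      ≤ -(b * c / 2) * Y ^ 2 - s * (b ^ 2 / 2) * Z ^ 2 := by
    nlinarith [P1, P3, P4, P5]
  have hbG2 : b * ((inner ℝ (A y) y : ℝ) + s * (inner ℝ (B x) x : ℝ)) < 0 := by
    rcases hyzne with hy0' | hz0'
    · have hYp : (0:ℝ) < Y := norm_pos_iff.mpr hy0'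
      have hY2 : (0:ℝ) < Y ^ 2 := by positivity
      have q1 : (0:ℝ) < b * c * Y ^ 2 := by positivity
      have q2 : (0:ℝ) ≤ s * (b ^ 2) * Z ^ 2 := by positivity
      linarith [hbG]
    · have hZp : (0:ℝ) < Z := norm_pos_iff.mpr hz0'
      have hZ2 : (0:ℝ) < Z ^ 2 := by positivity
      have q1 : (0:ℝ) < s * (b ^ 2) * Z ^ 2 := by positivity
      have q2 : (0:ℝ) ≤ b * c * Y ^ 2 := by positivity
      linarith [hbG]
  nlinarith [hbG2, hb]
end

section
/- For the standard action B(z) = Σ_{j ∈ ZMod r} y_j(x_{j+1} − x_j) on ℂ^r with r odd set M₋ = {1, ..., (r−1)/2} and M₊ = {−1, ..., −(r−1)/2} (mod r). Then B is negative definite on E₋ = ⊕_{m ∈ M₋} E_m, positive definite on E₊ = ⊕_{m ∈ M₊} E_m, and identically zero on E₀ (the constant vectors); hence E₋, of real dimension r−1, is a maximal subspace on which B is negative definite, and the Morse index of B equals r − 1. -/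
open Complex

noncomputable section

set_option linter.unusedSectionVars false
set_option maxHeartbeats 1000000

def fourierModeMap (r : ℕ) (m : ZMod r) : ℂ →ₗ[ℝ] (ZMod r → ℂ) where
  toFun b := fun j => b * Complex.exp (2 * Real.pi * I / r) ^ ((m * j).val)
  map_add' a b := by funext j; simp [add_mul]
  map_smul' c b := by
    funext j
    simp [Complex.real_smul, mul_assoc]

/-- `E_m = { (b·ρ^{mj})_j : b ∈ ℂ } ⊆ ℂ^r`. -/
def fourierMode (r : ℕ) (m : ZMod r) : Submodule ℝ (ZMod r → ℂ) :=
  LinearMap.range (fourierModeMap r m)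

variable (r : ℕ) [NeZero r]

def chr (k : ZMod r) : ℂ := Complex.exp (2 * Real.pi * I / r) ^ k.val

lemma zeta_pow : Complex.exp (2 * Real.pi * I / r) ^ r = 1 :=
  ((Complex.isPrimitiveRoot_exp r (NeZero.ne r)).pow_eq_one)

lemma zeta_pow_mod (a : ℕ) :
    Complex.exp (2 * Real.pi * I / r) ^ (a % r) = Complex.exp (2 * Real.pi * I / r) ^ a := by
  conv_rhs => rw [← Nat.div_add_mod a r]
  rw [pow_add, pow_mul, zeta_pow, one_pow, one_mul]

lemma chr_add (a b : ZMod r) : chr r (a + b) = chr r a * chr r b := by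
  rw [chr, chr, chr, ZMod.val_add, zeta_pow_mod, pow_add]

lemma chr_zero : chr r 0 = 1 := by simp [chr, ZMod.val_zero]

lemma sum_chr (c : ZMod r) : ∑ j : ZMod r, chr r (c * j) = if c = 0 then (r : ℂ) else 0 := by
  have key : ∀ j : ZMod r, chr r (c * j) = (Complex.exp (2 * Real.pi * I / r) ^ c.val) ^ j.val := by
    intro j
    rw [chr, ZMod.val_mul, zeta_pow_mod, pow_mul]
  simp_rw [key]
  rw [show (∑ j : ZMod r, (Complex.exp (2 * Real.pi * I / r) ^ c.val) ^ j.val) =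
      ∑ i ∈ Finset.range r, (Complex.exp (2 * Real.pi * I / r) ^ c.val) ^ i from
    Finset.sum_nbij' (fun j => j.val) (fun i => (i : ZMod r))
      (fun j _ => Finset.mem_range.2 (ZMod.val_lt j))
      (fun i hi => Finset.mem_univ _)
      (fun j _ => ZMod.natCast_rightInverse j)
      (fun i hi => ZMod.val_cast_of_lt (Finset.mem_range.1 hi))
      (fun j _ => rfl)]
  by_cases hc : c = 0
  · simp [hc, ZMod.val_zero]
  · rw [if_neg hc]
    have hne : Complex.exp (2 * Real.pi * I / r) ^ c.val ≠ 1 :=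
      (Complex.isPrimitiveRoot_exp r (NeZero.ne r)).pow_ne_one_of_pos_of_lt
        (fun h => hc (by rwa [← ZMod.val_eq_zero])) (ZMod.val_lt c)
    have h1 : (Complex.exp (2 * Real.pi * I / r) ^ c.val) ^ r = 1 := by
      rw [← pow_mul, mul_comm c.val r, pow_mul, zeta_pow, one_pow]
    rw [geom_sum_eq hne, h1, sub_self, zero_div]

lemma chr_mul_neg (k : ZMod r) : chr r k * chr r (-k) = 1 := by
  rw [← chr_add, add_neg_cancel, chr_zero]

lemma norm_chr (k : ZMod r) : ‖chr r k‖ = 1 := by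
  rw [chr, norm_pow, Complex.norm_exp]
  have : (2 * Real.pi * I / r).re = 0 := by
    rw [div_re]
    simp [Complex.mul_re, Complex.mul_im]
  rw [this, Real.exp_zero, one_pow]

lemma conj_chr (k : ZMod r) : (starRingEnd ℂ) (chr r k) = chr r (-k) := by
  have h1 : chr r k ≠ 0 := by
    intro h; have := norm_chr r k; rw [h] at this; simp at this
  have h2 : (chr r k)⁻¹ = chr r (-k) := by
    field_simp
    exact (chr_mul_neg r k).symm
  rw [← h2, Complex.inv_def, Complex.normSq_eq_norm_sq, norm_chr]
  simp

lemma im_chr (k : ZMod r) : (chr r k).im = Real.sin (2 * Real.pi * k.val / r) := by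
  rw [chr, ← Complex.exp_nat_mul]
  have : (k.val : ℂ) * (2 * Real.pi * I / r) = ((2 * Real.pi * k.val / r : ℝ) : ℂ) * I := by
    have hr : (r : ℂ) ≠ 0 := Nat.cast_ne_zero.2 (NeZero.ne r)
    push_cast
    field_simp
  rw [this, Complex.exp_ofReal_mul_I_im]

def zfun (A : Finset (ZMod r)) (b : ZMod r → ℂ) : ZMod r → ℂ :=
  fun j => ∑ m ∈ A, b m * chr r (m * j)

lemma expand (A B : Finset (ZMod r)) (b c : ZMod r → ℂ) :
    ∑ j : ZMod r, zfun r A b j * zfun r B c j =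
      (r : ℂ) * ∑ m ∈ A, (if -m ∈ B then b m * c (-m) else 0) := by
  simp only [zfun]
  have step : ∀ j : ZMod r,
      (∑ m ∈ A, b m * chr r (m * j)) * (∑ m' ∈ B, c m' * chr r (m' * j)) =
      ∑ m ∈ A, ∑ m' ∈ B, b m * c m' * chr r ((m + m') * j) := by
    intro j
    rw [Finset.sum_mul_sum]
    refine Finset.sum_congr rfl fun m _ => Finset.sum_congr rfl fun m' _ => ?_
    rw [add_mul, chr_add]; ring
  simp_rw [step]
  rw [Finset.sum_comm]
  rw [Finset.mul_sum]
  refine Finset.sum_congr rfl fun m _ => ?_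
  rw [Finset.sum_comm]
  have inner : ∀ m' ∈ B, (∑ j : ZMod r, b m * c m' * chr r ((m + m') * j)) =
      if m' = -m then b m * c m' * r else 0 := by
    intro m' _
    rw [← Finset.mul_sum, sum_chr]
    by_cases h : m' = -m
    · subst h
      rw [if_pos (by ring : m + -m = 0), if_pos rfl]
    · rw [if_neg h, if_neg (fun hc => h (eq_neg_of_add_eq_zero_right hc)), mul_zero]
  rw [Finset.sum_congr rfl inner, Finset.sum_ite_eq' B (-m) (fun m' => b m * c m' * r)]
  by_cases h : -m ∈ B
  · rw [if_pos h, if_pos h]; ring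
  · rw [if_neg h, if_neg h, mul_zero]

lemma zfun_shift (A : Finset (ZMod r)) (b : ZMod r → ℂ) (j : ZMod r) :
    zfun r A b (j + 1) = zfun r A (fun m => b m * chr r m) j := by
  simp only [zfun]
  refine Finset.sum_congr rfl fun m _ => ?_
  rw [mul_add, mul_one, chr_add]
  ring

lemma zfun_conj (A : Finset (ZMod r)) (c : ZMod r → ℂ) (j : ZMod r) :
    (starRingEnd ℂ) (zfun r A c j) =
      zfun r (A.image (fun m => -m)) (fun μ => (starRingEnd ℂ) (c (-μ))) j := by
  simp only [zfun, map_sum, map_mul, conj_chr]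
  rw [Finset.sum_image (by intro x _ y _ h; exact neg_injective h)]
  refine Finset.sum_congr rfl fun m _ => ?_
  rw [neg_neg, neg_mul]

lemma neg_mem_image (A : Finset (ZMod r)) (m : ZMod r) (hm : m ∈ A) :
    -m ∈ A.image (fun m => -m) := Finset.mem_image_of_mem _ hm

lemma master (A : Finset (ZMod r)) (H : ∀ m ∈ A, -m ∈ A → m = 0) (b : ZMod r → ℂ) :
    discreteAction r (zfun r A b) =
      (r / 2 : ℝ) * ∑ m ∈ A, Complex.normSq (b m) * Real.sin (2 * Real.pi * (-m).val / r) := by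
  set z := zfun r A b with hz
  have key : ∀ (u w v : ℂ), u.im * (w.re - v.re) =
      (u * (w + (starRingEnd ℂ) w - v - (starRingEnd ℂ) v) / 2).im := by
    intro u w v
    have h1 : w + (starRingEnd ℂ) w - v - (starRingEnd ℂ) v
        = ((2 * w.re : ℝ) : ℂ) - ((2 * v.re : ℝ) : ℂ) := by
      have hw := Complex.add_conj w
      have hv := Complex.add_conj v
      push_cast at hw hv ⊢
      rw [← hw, ← hv]; ring
    have h2 : u * (((2 * w.re : ℝ) : ℂ) - ((2 * v.re : ℝ) : ℂ)) / 2
        = u * ((w.re - v.re : ℝ) : ℂ) := by push_cast; ring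
    rw [h1, h2]
    simp [Complex.mul_im]
  set c1 : ZMod r → ℂ := fun m => b m * chr r m with hc1
  set A' := A.image (fun m : ZMod r => -m) with hA'
  set c2 : ZMod r → ℂ := fun μ => (starRingEnd ℂ) (c1 (-μ)) with hc2
  set c3 : ZMod r → ℂ := fun μ => (starRingEnd ℂ) (b (-μ)) with hc3
  have e1 : ∀ j, z (j + 1) = zfun r A c1 j := zfun_shift r A b
  have e2 : ∀ j, (starRingEnd ℂ) (z (j + 1)) = zfun r A' c2 j := by
    intro j; rw [e1 j, zfun_conj]
  have e3 : ∀ j, (starRingEnd ℂ) (z j) = zfun r A' c3 j := by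
    intro j; rw [hz, zfun_conj]
  have hB : discreteAction r z =
      ((∑ j : ZMod r, z j * (z (j + 1) + (starRingEnd ℂ) (z (j + 1)) - z j
        - (starRingEnd ℂ) (z j))) / 2).im := by
    rw [discreteAction]
    rw [show ((∑ j : ZMod r, z j * (z (j + 1) + (starRingEnd ℂ) (z (j + 1)) - z j
        - (starRingEnd ℂ) (z j))) / 2) = ∑ j : ZMod r, z j * (z (j + 1)
        + (starRingEnd ℂ) (z (j + 1)) - z j - (starRingEnd ℂ) (z j)) / 2 by
      rw [Finset.sum_div]]
    rw [Complex.im_sum]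
    exact Finset.sum_congr rfl fun j _ => key (z j) (z (j + 1)) (z j)
  have hsplit : (∑ j : ZMod r, z j * (z (j + 1) + (starRingEnd ℂ) (z (j + 1)) - z j
      - (starRingEnd ℂ) (z j))) =
      (∑ j : ZMod r, zfun r A b j * zfun r A c1 j)
      + (∑ j : ZMod r, zfun r A b j * zfun r A' c2 j)
      - (∑ j : ZMod r, zfun r A b j * zfun r A b j)
      - (∑ j : ZMod r, zfun r A b j * zfun r A' c3 j) := by
    rw [← Finset.sum_add_distrib, ← Finset.sum_sub_distrib, ← Finset.sum_sub_distrib]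
    refine Finset.sum_congr rfl fun j _ => ?_
    rw [e2 j, e3 j, e1 j, hz]
    ring
  have hS1 : (∑ j : ZMod r, zfun r A b j * zfun r A c1 j)
      = (∑ j : ZMod r, zfun r A b j * zfun r A b j) := by
    rw [expand, expand]
    congr 1
    refine Finset.sum_congr rfl fun m hm => ?_
    by_cases h : -m ∈ A
    · have hm0 : m = 0 := H m hm h
      subst hm0
      rw [if_pos h, if_pos h, hc1]
      simp only [neg_zero, chr_zero, mul_one]
    · rw [if_neg h, if_neg h]
  have hmemA' : ∀ m ∈ A, -m ∈ A' := fun m hm => Finset.mem_image_of_mem _ hm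
  have hS2 : (∑ j : ZMod r, zfun r A b j * zfun r A' c2 j)
      - (∑ j : ZMod r, zfun r A b j * zfun r A' c3 j)
      = (r : ℂ) * ∑ m ∈ A, ((Complex.normSq (b m) : ℝ) : ℂ) * (chr r (-m) - 1) := by
    rw [expand, expand, ← mul_sub, ← Finset.sum_sub_distrib]
    congr 1
    refine Finset.sum_congr rfl fun m hm => ?_
    rw [if_pos (hmemA' m hm), if_pos (hmemA' m hm), hc2, hc3, hc1]
    simp only [neg_neg]
    rw [map_mul, conj_chr]
    rw [← Complex.mul_conj]
    ring
  have hS2' : (∑ j : ZMod r, zfun r A b j * zfun r A b j)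
      + (∑ j : ZMod r, zfun r A b j * zfun r A' c2 j)
      - (∑ j : ZMod r, zfun r A b j * zfun r A b j)
      - (∑ j : ZMod r, zfun r A b j * zfun r A' c3 j)
      = (r : ℂ) * ∑ m ∈ A, ((Complex.normSq (b m) : ℝ) : ℂ) * (chr r (-m) - 1) := by
    rw [← hS2]; ring
  rw [hB, hsplit, hS1, hS2']
  have him : (((r : ℂ) * ∑ m ∈ A, ((Complex.normSq (b m) : ℝ) : ℂ) * (chr r (-m) - 1)) / 2).im
      = (r / 2 : ℝ) * ∑ m ∈ A, Complex.normSq (b m) * (chr r (-m)).im := by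
    have hcast : ((r : ℂ) * ∑ m ∈ A, ((Complex.normSq (b m) : ℝ) : ℂ) * (chr r (-m) - 1)) / 2
        = ((r / 2 : ℝ) : ℂ) * ∑ m ∈ A, ((Complex.normSq (b m) : ℝ) : ℂ) * (chr r (-m) - 1) := by
      push_cast; ring
    rw [hcast]
    rw [show (((r / 2 : ℝ) : ℂ) * ∑ m ∈ A, ((Complex.normSq (b m) : ℝ) : ℂ)
        * (chr r (-m) - 1)).im = (r / 2 : ℝ) * (∑ m ∈ A, ((Complex.normSq (b m) : ℝ) : ℂ)
        * (chr r (-m) - 1)).im by simp [Complex.mul_im]]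
    rw [Complex.im_sum]
    congr 1
    refine Finset.sum_congr rfl fun m _ => ?_
    simp [Complex.mul_im, Complex.sub_im]
  rw [him, Finset.mul_sum, Finset.mul_sum]
  refine Finset.sum_congr rfl fun m _ => ?_
  rw [im_chr]

lemma ortho (A : Finset (ZMod r)) (b : ZMod r → ℂ) (m₀ : ZMod r) (hm₀ : m₀ ∈ A) :
    ∑ j : ZMod r, zfun r A b j * chr r ((-m₀) * j) = (r : ℂ) * b m₀ := by
  have h : ∀ j : ZMod r, chr r ((-m₀) * j) = zfun r {-m₀} (fun _ => 1) j := by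
    intro j; simp [zfun]
  simp_rw [h]
  rw [expand]
  congr 1
  rw [show (∑ m ∈ A, if -m ∈ ({-m₀} : Finset (ZMod r)) then b m * (fun _ : ZMod r => (1:ℂ)) (-m) else 0)
      = ∑ m ∈ A, if m = m₀ then b m else 0 from
    Finset.sum_congr rfl fun m _ => by
      by_cases h' : m = m₀
      · subst h'; rw [if_pos (Finset.mem_singleton_self _), if_pos rfl, mul_one]
      · rw [if_neg (fun hc => h' (neg_injective (Finset.mem_singleton.1 hc))), if_neg h']]
  rw [Finset.sum_ite_eq' A m₀ b, if_pos hm₀]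

def extFun (A : Finset (ZMod r)) (b : ↥A → ℂ) : ZMod r → ℂ :=
  fun m => if h : m ∈ A then b ⟨m, h⟩ else 0

def Tmap (A : Finset (ZMod r)) : (↥A → ℂ) →ₗ[ℝ] (ZMod r → ℂ) where
  toFun b := zfun r A (extFun r A b)
  map_add' x y := by
    funext j
    simp only [zfun, extFun, Pi.add_apply, ← Finset.sum_add_distrib]
    refine Finset.sum_congr rfl fun m hm => ?_
    rw [dif_pos hm, dif_pos hm, dif_pos hm]
    show (x ⟨m, hm⟩ + y ⟨m, hm⟩) * chr r (m * j) = _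
    ring
  map_smul' c x := by
    funext j
    simp only [zfun, extFun, RingHom.id_apply, Pi.smul_apply, Complex.real_smul,
      Finset.mul_sum]
    refine Finset.sum_congr rfl fun m hm => ?_
    rw [dif_pos hm, dif_pos hm]
    show (c : ℂ) * x ⟨m, hm⟩ * chr r (m * j) = _
    ring

lemma Tmap_inj (A : Finset (ZMod r)) : Function.Injective (Tmap r A) := by
  rw [← LinearMap.ker_eq_bot]
  rw [Submodule.eq_bot_iff]
  intro b hb
  have hb' : zfun r A (extFun r A b) = 0 := hb
  funext m₀
  have := ortho r A (extFun r A b) m₀.1 m₀.2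
  rw [show (∑ j : ZMod r, zfun r A (extFun r A b) j * chr r ((-m₀.1) * j)) = 0 by
    simp [hb']] at this
  have hr : (r : ℂ) ≠ 0 := Nat.cast_ne_zero.2 (NeZero.ne r)
  have h0 : extFun r A b m₀.1 = 0 := by
    rcases mul_eq_zero.1 this.symm with h | h
    · exact absurd h hr
    · exact h
  rw [extFun, dif_pos m₀.2] at h0
  simpa using h0
lemma Tmap_range (A : Finset (ZMod r)) :
    LinearMap.range (Tmap r A) = ⨆ m ∈ A, fourierMode r m := by
  apply le_antisymm
  · rintro z ⟨b, rfl⟩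
    have : Tmap r A b = ∑ m ∈ A.attach, (fourierModeMap r m.1) (extFun r A b m.1) := by
      funext j
      show zfun r A (extFun r A b) j = _
      rw [Finset.sum_apply]
      rw [zfun, ← Finset.sum_attach A (fun m => extFun r A b m * chr r (m * j))]
      rfl
    rw [this]
    refine Submodule.sum_mem _ fun m _ => Submodule.mem_iSup_of_mem m.1
      (Submodule.mem_iSup_of_mem m.2 ?_)
    exact LinearMap.mem_range_self _ _
  · refine iSup₂_le fun m hm => ?_
    rintro z ⟨c, rfl⟩
    refine ⟨fun m' => if (m' : ZMod r) = m then c else 0, ?_⟩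
    funext j
    show zfun r A _ j = _
    rw [zfun]
    rw [show (∑ m' ∈ A, extFun r A (fun m'' => if (m'' : ZMod r) = m then c else 0) m'
          * chr r (m' * j)) = ∑ m' ∈ A, if m' = m then c * chr r (m' * j) else 0 from
      Finset.sum_congr rfl fun m' hm' => by
        rw [extFun, dif_pos hm']
        by_cases h' : m' = m
        · rw [if_pos h', if_pos h']
        · rw [if_neg h', if_neg h', zero_mul]]
    rw [Finset.sum_ite_eq' A m (fun m' => c * chr r (m' * j)), if_pos hm]
    rfl

lemma finrank_range_Tmap (A : Finset (ZMod r)) :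
    Module.finrank ℝ ↥(LinearMap.range (Tmap r A)) = 2 * A.card := by
  rw [LinearMap.finrank_range_of_inj (Tmap_inj r A)]
  rw [Module.finrank_pi_fintype ℝ]
  simp [Complex.finrank_real_complex, Fintype.card_coe, mul_comm]

lemma Tmap_apply (A : Finset (ZMod r)) (b : ↥A → ℂ) :
    Tmap r A b = zfun r A (extFun r A b) := rfl

lemma zfun_def (A : Finset (ZMod r)) (b : ZMod r → ℂ) (j : ZMod r) :
    zfun r A b j = ∑ m ∈ A, b m * chr r (m * j) := rfl

lemma extFun_def (A : Finset (ZMod r)) (b : ↥A → ℂ) (m : ZMod r) :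
    extFun r A b m = if h : m ∈ A then b ⟨m, h⟩ else 0 := rfl

lemma discreteAction_zero_mode (z : ZMod r → ℂ) (hz : z ∈ fourierMode r 0) :
    discreteAction r z = 0 := by
  obtain ⟨c, rfl⟩ := hz
  have h : ∀ j, (fourierModeMap r 0 c) j = c := by
    intro j
    show c * _ = c
    rw [zero_mul, ZMod.val_zero, pow_zero, mul_one]
  rw [discreteAction]
  simp [h]

/-- For `r` odd, the discrete action `B` is negative definite on
`E₋ = ⊕_{m ∈ M₋} E_m` (`M₋ = {1, …, (r−1)/2}`), positive definite on
`E₊ = ⊕_{m ∈ M₊} E_m` (`M₊ = −M₋`), and vanishes on the constant vectors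
`E₀`; `E₋` has real dimension `r − 1` and is a maximal negative subspace,
so the Morse index of `B` is `r − 1`. -/
theorem discreteAction_index (r : ℕ) [NeZero r] (hodd : Odd r)
    (Eneg Epos : Submodule ℝ (ZMod r → ℂ))
    (hEneg : Eneg = ⨆ m ∈ Finset.Icc 1 ((r - 1) / 2),
      fourierMode r ((m : ℕ) : ZMod r))
    (hEpos : Epos = ⨆ m ∈ Finset.Icc 1 ((r - 1) / 2),
      fourierMode r (-((m : ℕ) : ZMod r))) :
    (∀ z ∈ Eneg, z ≠ 0 → discreteAction r z < 0) ∧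
    (∀ z ∈ Epos, z ≠ 0 → 0 < discreteAction r z) ∧
    (∀ z ∈ fourierMode r 0, discreteAction r z = 0) ∧
    Module.finrank ℝ Eneg = r - 1 ∧
    (∀ W : Submodule ℝ (ZMod r → ℂ),
      (∀ z ∈ W, z ≠ 0 → discreteAction r z < 0) →
      Module.finrank ℝ W ≤ r - 1) := by
  obtain ⟨k, hk⟩ := hodd
  have hk2 : (r - 1) / 2 = k := by omega
  have hrpos : (0 : ℝ) < r := by exact_mod_cast Nat.pos_of_ne_zero (NeZero.ne r)
  set Am : Finset (ZMod r) := (Finset.Icc 1 k).image (Nat.cast : ℕ → ZMod r) with hAm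
  set Ap : Finset (ZMod r) := (Finset.Icc 1 k).image (fun i : ℕ => -(i : ZMod r)) with hAp
  set A0 : Finset (ZMod r) := insert (0 : ZMod r) Ap with hA0
  -- val facts
  have hval : ∀ i ∈ Finset.Icc 1 k, ((i : ZMod r)).val = i := by
    intro i hi
    rw [Finset.mem_Icc] at hi
    exact ZMod.val_cast_of_lt (by omega)
  have hcast_ne : ∀ i ∈ Finset.Icc 1 k, ((i : ZMod r)) ≠ 0 := by
    intro i hi h0
    have := hval i hi
    rw [h0, ZMod.val_zero] at this
    rw [Finset.mem_Icc] at hi; omega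
  have hnegval : ∀ i ∈ Finset.Icc 1 k, (-(i : ZMod r)).val = r - i := by
    intro i hi
    rw [ZMod.neg_val, if_neg (hcast_ne i hi), hval i hi]
  -- membership facts
  have memAm : ∀ m ∈ Am, 1 ≤ m.val ∧ m.val ≤ k := by
    intro m hm
    rw [hAm, Finset.mem_image] at hm
    obtain ⟨i, hi, rfl⟩ := hm
    have := hval i hi; rw [Finset.mem_Icc] at hi; omega
  have memApNeg : ∀ m ∈ Ap, 1 ≤ (-m).val ∧ (-m).val ≤ k := by
    intro m hm
    rw [hAp, Finset.mem_image] at hm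
    obtain ⟨i, hi, rfl⟩ := hm
    rw [neg_neg]
    have := hval i hi; rw [Finset.mem_Icc] at hi; omega
  have memAp : ∀ m ∈ Ap, k + 1 ≤ m.val ∧ m.val ≤ r - 1 := by
    intro m hm
    rw [hAp, Finset.mem_image] at hm
    obtain ⟨i, hi, rfl⟩ := hm
    have h1 := hnegval i hi; rw [Finset.mem_Icc] at hi; omega
  have hvalne : ∀ m : ZMod r, m ≠ 0 → (-m).val = r - m.val := by
    intro m hm; rw [ZMod.neg_val, if_neg hm]
  have hne0 : ∀ m : ZMod r, 1 ≤ m.val → m ≠ 0 := by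
    intro m h h0; rw [h0, ZMod.val_zero] at h; omega
  -- H hypotheses
  have Hm : ∀ m ∈ Am, -m ∈ Am → m = 0 := by
    intro m hm hnm
    obtain ⟨h1, h2⟩ := memAm m hm
    obtain ⟨h3, h4⟩ := memAm _ hnm
    rw [hvalne m (hne0 m h1)] at h3 h4
    have := ZMod.val_lt m
    omega
  have Hp : ∀ m ∈ Ap, -m ∈ Ap → m = 0 := by
    intro m hm hnm
    obtain ⟨h1, h2⟩ := memAp m hm
    obtain ⟨h3, h4⟩ := memAp _ hnm
    obtain ⟨h5, h6⟩ := memApNeg m hm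
    omega
  have H0 : ∀ m ∈ A0, -m ∈ A0 → m = 0 := by
    intro m hm hnm
    rw [hA0, Finset.mem_insert] at hm hnm
    rcases hm with h | h
    · exact h
    rcases hnm with h' | h'
    · rwa [neg_eq_zero] at h'
    · exact absurd h' (fun hc => by
        obtain ⟨h1, h2⟩ := memAp m h
        obtain ⟨h3, h4⟩ := memAp _ hc
        obtain ⟨h5, h6⟩ := memApNeg m h
        omega)
  -- cards
  have cardAm : Am.card = k := by
    rw [hAm, Finset.card_image_of_injOn, Nat.card_Icc]
    · omega
    · intro a ha b hb hab
      rw [Finset.mem_coe] at ha hb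
      rw [← hval a ha, hab, hval b hb]
  have cardAp : Ap.card = k := by
    rw [hAp, Finset.card_image_of_injOn, Nat.card_Icc]
    · omega
    · intro a ha b hb hab
      rw [Finset.mem_coe] at ha hb
      simp only [neg_inj] at hab
      have h1 := hval a ha; have h2 := hval b hb
      rw [← h1, hab, h2]
  have h0notin : (0 : ZMod r) ∉ Ap := by
    intro h
    obtain ⟨h1, _⟩ := memApNeg 0 h
    rw [neg_zero, ZMod.val_zero] at h1; omega
  have cardA0 : A0.card = k + 1 := by
    rw [hA0, Finset.card_insert_of_notMem h0notin, cardAp]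
  -- sin sign lemmas
  have sinneg : ∀ v : ℕ, r < 2 * v → v < r → Real.sin (2 * Real.pi * v / r) < 0 := by
    intro v h1 h2
    have hπ := Real.pi_pos
    have hv1 : (r : ℝ) < 2 * v := by exact_mod_cast h1
    have hv2 : (v : ℝ) < r := by exact_mod_cast h2
    have hlow : Real.pi < 2 * Real.pi * v / r := by
      rw [lt_div_iff₀ hrpos]; nlinarith
    have hhigh : 2 * Real.pi * v / r < 2 * Real.pi := by
      rw [div_lt_iff₀ hrpos]; nlinarith
    have := Real.sin_neg_of_neg_of_neg_pi_lt
      (x := 2 * Real.pi * v / r - 2 * Real.pi) (by linarith) (by linarith)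
    rwa [Real.sin_sub_two_pi] at this
  have sinpos : ∀ v : ℕ, 1 ≤ v → 2 * v < r → 0 < Real.sin (2 * Real.pi * v / r) := by
    intro v h1 h2
    have hπ := Real.pi_pos
    have hv1 : (1 : ℝ) ≤ v := by exact_mod_cast h1
    have hv2 : 2 * (v:ℝ) < r := by exact_mod_cast h2
    apply Real.sin_pos_of_pos_of_lt_pi
    · positivity
    · rw [div_lt_iff₀ hrpos]; nlinarith
  -- identification of Eneg and Epos
  have hEneg' : Eneg = LinearMap.range (Tmap r Am) := by
    rw [hEneg, Tmap_range, hk2, hAm, ← Finset.sup_eq_iSup, ← Finset.sup_eq_iSup,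
      Finset.sup_image]
    rfl
  have hEpos' : Epos = LinearMap.range (Tmap r Ap) := by
    rw [hEpos, Tmap_range, hk2, hAp, ← Finset.sup_eq_iSup, ← Finset.sup_eq_iSup,
      Finset.sup_image]
    rfl
  -- generic nonzero coefficient lemma
  have exnz : ∀ (A : Finset (ZMod r)) (b : ↥A → ℂ), Tmap r A b ≠ 0 →
      ∃ m ∈ A, extFun r A b m ≠ 0 := by
    intro A b hz
    by_contra hc
    push_neg at hc
    apply hz
    rw [Tmap_apply]
    funext j
    rw [zfun_def]
    refine Finset.sum_eq_zero fun m hm => by rw [hc m hm, zero_mul]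
  refine ⟨?_, ?_, ?_, ?_, ?_⟩
  · -- negative definite on Eneg
    intro z hz hz0
    rw [hEneg'] at hz
    obtain ⟨b, rfl⟩ := hz
    obtain ⟨m₀, hm₀, hb₀⟩ := exnz Am b hz0
    rw [Tmap_apply, master r Am Hm]
    apply mul_neg_of_pos_of_neg (half_pos hrpos)
    have hterm : ∀ m ∈ Am,
        Complex.normSq (extFun r Am b m) * Real.sin (2 * Real.pi * (-m).val / r) ≤ 0 := by
      intro m hm
      obtain ⟨h1, h2⟩ := memAm m hm
      have hv := hvalne m (hne0 m h1)
      have hlt := ZMod.val_lt m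
      apply mul_nonpos_of_nonneg_of_nonpos (Complex.normSq_nonneg _)
      exact le_of_lt (sinneg _ (by omega) (by omega))
    have hstrict : Complex.normSq (extFun r Am b m₀)
        * Real.sin (2 * Real.pi * (-m₀).val / r) < 0 := by
      obtain ⟨h1, h2⟩ := memAm m₀ hm₀
      have hv := hvalne m₀ (hne0 m₀ h1)
      have hlt := ZMod.val_lt m₀
      apply mul_neg_of_pos_of_neg (Complex.normSq_pos.2 hb₀)
      exact sinneg _ (by omega) (by omega)
    calc ∑ m ∈ Am, Complex.normSq (extFun r Am b m) * Real.sin (2 * Real.pi * (-m).val / r)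
        < ∑ m ∈ Am, (0 : ℝ) := by
          refine Finset.sum_lt_sum hterm ⟨m₀, hm₀, ?_⟩
          exact hstrict
      _ = 0 := Finset.sum_const_zero
  · -- positive definite on Epos
    intro z hz hz0
    rw [hEpos'] at hz
    obtain ⟨b, rfl⟩ := hz
    obtain ⟨m₀, hm₀, hb₀⟩ := exnz Ap b hz0
    rw [Tmap_apply, master r Ap Hp]
    apply mul_pos (half_pos hrpos)
    have hterm : ∀ m ∈ Ap,
        (0:ℝ) ≤ Complex.normSq (extFun r Ap b m) * Real.sin (2 * Real.pi * (-m).val / r) := by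
      intro m hm
      obtain ⟨h1, h2⟩ := memApNeg m hm
      apply mul_nonneg (Complex.normSq_nonneg _)
      exact le_of_lt (sinpos _ (by omega) (by omega))
    have hstrict : 0 < Complex.normSq (extFun r Ap b m₀)
        * Real.sin (2 * Real.pi * (-m₀).val / r) := by
      obtain ⟨h1, h2⟩ := memApNeg m₀ hm₀
      apply mul_pos (Complex.normSq_pos.2 hb₀)
      exact sinpos _ (by omega) (by omega)
    calc (0:ℝ) = ∑ m ∈ Ap, (0 : ℝ) := Finset.sum_const_zero.symm
      _ < ∑ m ∈ Ap, Complex.normSq (extFun r Ap b m) * Real.sin (2 * Real.pi * (-m).val / r) :=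
          Finset.sum_lt_sum hterm ⟨m₀, hm₀, hstrict⟩
  · exact fun z hz => discreteAction_zero_mode r z hz
  · rw [hEneg', finrank_range_Tmap, cardAm]; omega
  · intro W hW
    set P := LinearMap.range (Tmap r A0) with hP
    have hPge : ∀ z ∈ P, 0 ≤ discreteAction r z := by
      rintro z ⟨b, rfl⟩
      rw [Tmap_apply, master r A0 H0]
      apply mul_nonneg (le_of_lt (half_pos hrpos))
      refine Finset.sum_nonneg fun m hm => ?_
      rw [hA0, Finset.mem_insert] at hm
      rcases hm with h | h
      · subst h
        simp
      · obtain ⟨h1, h2⟩ := memApNeg m h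
        exact mul_nonneg (Complex.normSq_nonneg _) (le_of_lt (sinpos _ (by omega) (by omega)))
    have hinf : W ⊓ P = ⊥ := by
      rw [Submodule.eq_bot_iff]
      intro x hx
      by_contra hx0
      exact absurd (hPge x hx.2) (not_le.2 (hW x hx.1 hx0))
    have htot : Module.finrank ℝ (ZMod r → ℂ) = 2 * r := by
      rw [Module.finrank_pi_fintype ℝ]
      simp [Complex.finrank_real_complex, ZMod.card, mul_comm]
    have hsum := Submodule.finrank_sup_add_finrank_inf_eq W P
    rw [hinf, finrank_bot] at hsum
    have hle : Module.finrank ℝ ↥(W ⊔ P) ≤ 2 * r := htot ▸ Submodule.finrank_le _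
    have hPrank : Module.finrank ℝ ↥P = 2 * (k + 1) := by
      rw [hP, finrank_range_Tmap, cardA0]
    omega


end
end
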